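/- Let f : ℝ^d → ℝ be convex and twice differentiable with minimizer x⋆. Let X be a twice-differentiable solution of Nesterov's accelerated gradient flow X''(t) + (3/t) X'(t) + ∇f(X t) = 0 on (0, ∞). Define V(t) = t² (f(X t) - f(x⋆)) + 2 ‖(X t - x⋆) + (t/2) X'(t)‖². Then V is nonincreasing on (0, ∞), and consequently f(X t) - f(x⋆) ≤ V(t₀)/t² for all t ≥ t₀ > 0. -/

import Mathlib

open scoped RealInnerProductSpace
open Real Set

theorem accelerated_gradient_flow_convex_rate
    (d : ℕ) (f : EuclideanSpace ℝ (Fin d) → ℝ) (hf : ContDiff ℝ 2 f)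
    (hconv : ∀ x y, f y ≥ f x + ⟪gradient f x, y - x⟫)
    (xstar : EuclideanSpace ℝ (Fin d)) (hmin : ∀ y, f xstar ≤ f y)
    (X X' X'' : ℝ → EuclideanSpace ℝ (Fin d))
    (hX : ∀ t ∈ Set.Ioi (0 : ℝ), HasDerivAt X (X' t) t)
    (hX' : ∀ t ∈ Set.Ioi (0 : ℝ), HasDerivAt X' (X'' t) t)
    (hODE : ∀ t ∈ Set.Ioi (0 : ℝ),
      X'' t + (3 / t) • X' t + gradient f (X t) = 0)
    (V : ℝ → ℝ)
    (hV : ∀ t, V t = t ^ 2 * (f (X t) - f xstar)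
        + 2 * ‖(X t - xstar) + (t / 2) • X' t‖ ^ 2) :
    AntitoneOn V (Set.Ioi (0 : ℝ)) ∧
      ∀ t₀ t : ℝ, 0 < t₀ → t₀ ≤ t → f (X t) - f xstar ≤ V t₀ / t ^ 2 := by
  set g : EuclideanSpace ℝ (Fin d) → EuclideanSpace ℝ (Fin d) := gradient f with hg
  -- derivative of Z t = X t - xstar + (t/2) • X' t
  set Z : ℝ → EuclideanSpace ℝ (Fin d) := fun t => (X t - xstar) + (t / 2) • X' t with hZ
  have hZder : ∀ t ∈ Set.Ioi (0 : ℝ), HasDerivAt Z (-(t / 2) • g (X t)) t := by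
    intro t ht
    have ht0 : (t : ℝ) ≠ 0 := ne_of_gt ht
    have h1 : HasDerivAt (fun s : ℝ => s / 2) (1 / 2 : ℝ) t := by
      simpa using (hasDerivAt_id t).div_const 2
    have h2 : HasDerivAt (fun s => (s / 2) • X' s)
        ((t / 2) • X'' t + (1 / 2 : ℝ) • X' t) t := h1.smul (hX' t ht)
    have h3 : HasDerivAt Z (X' t + ((t / 2) • X'' t + (1 / 2 : ℝ) • X' t)) t :=
      ((hX t ht).sub_const xstar).add h2
    have hXval : X'' t = -((3 / t) • X' t) - g (X t) := by
      have h0 := hODE t ht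
      linear_combination (norm := module) h0
    convert h3 using 1
    rw [hXval]
    match_scalars <;> (field_simp; try ring)
  have hgradAt : ∀ x, HasGradientAt f (g x) x := fun x =>
    (hf.differentiable (by norm_num) x).hasGradientAt
  -- derivative of V
  have hVder : ∀ t ∈ Set.Ioi (0 : ℝ),
      HasDerivAt V (2 * t * ((f (X t) - f xstar) - ⟪g (X t), X t - xstar⟫)) t := by
    intro t ht
    have hfX : HasDerivAt (fun s => f (X s)) ⟪g (X t), X' t⟫ t := by
      have h := (hgradAt (X t)).hasFDerivAt.comp_hasDerivAt t (hX t ht)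
      simp at h
      exact h
    have h1 : HasDerivAt (fun s => s ^ 2 * (f (X s) - f xstar))
        (2 * t * (f (X t) - f xstar) + t ^ 2 * ⟪g (X t), X' t⟫) t := by
      have := ((hasDerivAt_pow 2 t)).mul (hfX.sub_const (f xstar))
      exact this.congr_deriv (by norm_num <;> ring)
    have h2 : HasDerivAt (fun s => 2 * ⟪Z s, Z s⟫)
        (2 * (⟪Z t, -(t / 2) • g (X t)⟫ + ⟪-(t / 2) • g (X t), Z t⟫)) t :=
      ((hZder t ht).inner ℝ (hZder t ht)).const_mul 2
    have hVeq : V = fun s => s ^ 2 * (f (X s) - f xstar) + 2 * ⟪Z s, Z s⟫ := by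
      funext s
      rw [hV s, real_inner_self_eq_norm_sq]
    rw [hVeq]
    refine (h1.add h2).congr_deriv ?_
    simp only [hZ, inner_add_left, inner_add_right, real_inner_smul_left,
      real_inner_smul_right, inner_neg_left, inner_neg_right,
      real_inner_comm (X t - xstar) (g (X t)), real_inner_comm (X' t) (g (X t))]
    ring
  have hderiv_nonpos : ∀ t ∈ Set.Ioi (0 : ℝ), deriv V t ≤ 0 := by
    intro t ht
    rw [(hVder t ht).deriv]
    have hc := hconv (X t) xstar
    have h1 : (f (X t) - f xstar) - ⟪g (X t), X t - xstar⟫ ≤ 0 := by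
      have : ⟪g (X t), xstar - X t⟫ = -⟪g (X t), X t - xstar⟫ := by
        rw [← inner_neg_right]; congr 1; abel
      rw [this] at hc
      linarith
    have ht' : (0 : ℝ) ≤ 2 * t := by have := mem_Ioi.mp ht; linarith
    exact mul_nonpos_of_nonneg_of_nonpos ht' h1
  have hanti : AntitoneOn V (Set.Ioi (0 : ℝ)) := by
    apply antitoneOn_of_deriv_nonpos (convex_Ioi 0)
    · intro t ht
      exact ((hVder t ht).continuousAt).continuousWithinAt
    · rw [interior_Ioi]
      intro t ht
      exact ((hVder t ht).differentiableAt).differentiableWithinAt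
    · rw [interior_Ioi]; exact hderiv_nonpos
  refine ⟨hanti, fun t₀ t ht₀ htt => ?_⟩
  have ht : (0 : ℝ) < t := lt_of_lt_of_le ht₀ htt
  have hVt : t ^ 2 * (f (X t) - f xstar) ≤ V t := by
    rw [hV t]
    nlinarith [norm_nonneg ((X t - xstar) + (t / 2) • X' t),
      sq_nonneg ‖(X t - xstar) + (t / 2) • X' t‖]
  have hVle : V t ≤ V t₀ := hanti (mem_Ioi.2 ht₀) (mem_Ioi.2 ht) htt
  have ht2 : (0 : ℝ) < t ^ 2 := by positivity
  rw [le_div_iff₀ ht2]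
  calc (f (X t) - f xstar) * t ^ 2 = t ^ 2 * (f (X t) - f xstar) := by ring
    _ ≤ V t := hVt
    _ ≤ V t₀ := hVle
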